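/- For any real number x with |x| ≤ 1 − δ, where 0 < δ < 1, it holds that 1 − cos(2πx) ≥ δ²x². -/

import Mathlib

open Real

lemma aux_sin_lb (δ x : ℝ) (hδ0 : 0 < δ) (hδ1 : δ < 1) (h0 : 0 ≤ x)
    (hx : x ≤ 1 - δ) : δ * x ≤ Real.sin (π * x) := by
  have hπ := Real.pi_pos
  rcases le_or_gt x (1/2) with h | h
  · have h1 : 2 / π * (π * x) ≤ Real.sin (π * x) :=
      Real.mul_le_sin (by positivity) (by nlinarith)
    have h2 : 2 / π * (π * x) = 2 * x := by field_simp
    nlinarith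
  · have hx1 : x ≤ 1 := by linarith
    have h1 : 2 / π * (π * (1 - x)) ≤ Real.sin (π * (1 - x)) :=
      Real.mul_le_sin (by nlinarith) (by nlinarith)
    have h2 : Real.sin (π * (1 - x)) = Real.sin (π * x) := by
      rw [mul_one_sub, Real.sin_pi_sub]
    have h3 : 2 / π * (π * (1 - x)) = 2 * (1 - x) := by field_simp
    nlinarith

/-- For any real number `x` with `|x| ≤ 1 − δ`, where `0 < δ < 1`,
it holds that `1 − cos(2πx) ≥ δ²x²`. -/
theorem stmt0 (δ x : ℝ) (hδ0 : 0 < δ) (hδ1 : δ < 1) (hx : |x| ≤ 1 - δ) :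
    1 - Real.cos (2 * Real.pi * x) ≥ δ ^ 2 * x ^ 2 := by
  have h0 : (0:ℝ) ≤ |x| := abs_nonneg x
  have hs := aux_sin_lb δ |x| hδ0 hδ1 h0 hx
  have hδx : 0 ≤ δ * |x| := by positivity
  have hsq : Real.sin (π * |x|) ^ 2 = Real.sin (π * x) ^ 2 := by
    rcases abs_cases x with ⟨h, _⟩ | ⟨h, _⟩
    · rw [h]
    · rw [h, mul_neg, Real.sin_neg, neg_sq]
  have hcos : Real.cos (2 * π * x) = 1 - 2 * Real.sin (π * x) ^ 2 := by
    have h2 : 2 * π * x = 2 * (π * x) := by ring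
    rw [h2, Real.cos_two_mul]
    have hpyth := Real.sin_sq_add_cos_sq (π * x)
    nlinarith
  have habs : |x| ^ 2 = x ^ 2 := sq_abs x
  nlinarith [sq_nonneg (Real.sin (π * |x|) - δ * |x|)]
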